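/- Suppose sup over all distributions Q with W_∞(Q_0, Q) ≤ r of E_Q[f(w,·)] ≤ ε_pre, and 0 ≤ f(w,·) ≤ M. Then for any distribution P_0, sup over all P with W_∞(P_0, P) ≤ r of E_P[f(w,·)] ≤ ε_pre + 2·M·TV(P_0, Q_0). -/

import Mathlib

open MeasureTheory ENNReal

def IsCoupling {α : Type*} [MeasurableSpace α] (π : Measure (α × α)) (P Q : Measure α) : Prop :=
  π.map Prod.fst = P ∧ π.map Prod.snd = Q

noncomputable def Winf {α : Type*} [MeasurableSpace α] [PseudoEMetricSpace α]
    (P Q : Measure α) : ℝ≥0∞ :=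
  ⨅ π ∈ {π : Measure (α × α) | IsProbabilityMeasure π ∧ IsCoupling π P Q},
    essSup (fun p => edist p.1 p.2) π

open Filter Set TopologicalSpace Topology NNReal in
/-- From `Winf P Q ≤ r` (an infimum), extract an *exact* coupling `π` with
`π {d > r} = 0`, via an ultrafilter-limit content construction. -/
lemma exists_good_coupling {X : Type*} [MetricSpace X] [CompactSpace X]
    [MeasurableSpace X] [BorelSpace X]
    (P Q : Measure X) [IsProbabilityMeasure P] [IsProbabilityMeasure Q] {r : ℝ≥0∞} (hr : r ≠ ⊤)
    (h : Winf P Q ≤ r) :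
    ∃ π : Measure (X × X), IsProbabilityMeasure π ∧ IsCoupling π P Q ∧
      π {p : X × X | r < edist p.1 p.2} = 0 := by
  -- step 1: near-optimal couplings
  have hex : ∀ n : ℕ, ∃ π : Measure (X × X),
      (IsProbabilityMeasure π ∧ IsCoupling π P Q) ∧
      essSup (fun p : X × X => edist p.1 p.2) π < r + ((n + 1 : ℕ) : ℝ≥0∞)⁻¹ := by
    intro n
    have hlt : Winf P Q < r + ((n + 1 : ℕ) : ℝ≥0∞)⁻¹ :=
      h.trans_lt (ENNReal.lt_add_right hr (by simp))
    unfold Winf at hlt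
    rw [iInf_lt_iff] at hlt
    obtain ⟨π, hπ⟩ := hlt
    rw [iInf_lt_iff] at hπ
    obtain ⟨hmem, hπ⟩ := hπ
    exact ⟨π, hmem, hπ⟩
  choose π hπmem hπess using hex
  haveI : ∀ n, IsProbabilityMeasure (π n) := fun n => (hπmem n).1
  -- step 2: ultrafilter limit set function
  obtain ⟨𝒰, h𝒰⟩ := exists_ultrafilter_le (atTop : Filter ℕ)
  set m : Set (X × X) → ℝ≥0∞ := fun A => (𝒰.map fun n => π n A).lim with hm_def
  have hm_tendsto : ∀ A : Set (X × X), Tendsto (fun n => π n A) (𝒰 : Filter ℕ) (𝓝 (m A)) := by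
    intro A
    have h2 := (𝒰.map fun n => π n A).le_nhds_lim
    rwa [Ultrafilter.coe_map] at h2
  have hm_mono : ∀ {A B : Set (X × X)}, A ⊆ B → m A ≤ m B := fun {A B} hAB =>
    le_of_tendsto_of_tendsto' (hm_tendsto A) (hm_tendsto B) fun n => measure_mono hAB
  have hm_fst : ∀ {A : Set X}, MeasurableSet A → m (Prod.fst ⁻¹' A) = P A := by
    intro A hA
    refine tendsto_nhds_unique (hm_tendsto _) ?_
    have he : (fun n => π n (Prod.fst ⁻¹' A)) = fun _ => P A := by
      funext n
      rw [← Measure.map_apply measurable_fst hA, (hπmem n).2.1]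
    rw [he]; exact tendsto_const_nhds
  have hm_snd : ∀ {A : Set X}, MeasurableSet A → m (Prod.snd ⁻¹' A) = Q A := by
    intro A hA
    refine tendsto_nhds_unique (hm_tendsto _) ?_
    have he : (fun n => π n (Prod.snd ⁻¹' A)) = fun _ => Q A := by
      funext n
      rw [← Measure.map_apply measurable_snd hA, (hπmem n).2.2]
    rw [he]; exact tendsto_const_nhds
  have hm_univ : m Set.univ = 1 := by
    have h2 := hm_fst (A := Set.univ) MeasurableSet.univ
    simpa using h2
  have hm_empty : m ∅ = 0 := by
    have h2 := hm_fst (A := (∅ : Set X)) MeasurableSet.empty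
    simpa using h2
  have hm_add_le : ∀ A B : Set (X × X), m (A ∪ B) ≤ m A + m B := fun A B =>
    le_of_tendsto_of_tendsto' (hm_tendsto _) ((hm_tendsto A).add (hm_tendsto B))
      fun n => measure_union_le A B
  have hm_add_ge : ∀ A B : Set (X × X), Disjoint A B → MeasurableSet B →
      m A + m B ≤ m (A ∪ B) := by
    intro A B hd hB
    refine le_of_tendsto_of_tendsto' ((hm_tendsto A).add (hm_tendsto B)) (hm_tendsto _)
      fun n => ?_
    rw [measure_union hd hB]
  -- step 3: the content
  set lam : Compacts (X × X) → ℝ≥0∞ :=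
    fun K => ⨅ (U : Opens (X × X)) (_ : (K : Set (X × X)) ⊆ (U : Set (X × X))), m U
    with hlam_def
  have hlam_le : ∀ (K : Compacts (X × X)) (U : Opens (X × X)),
      (K : Set (X × X)) ⊆ (U : Set (X × X)) → lam K ≤ m U := fun K U hKU => iInf₂_le U hKU
  have hlam_le_one : ∀ K, lam K ≤ 1 := fun K =>
    (hlam_le K ⊤ (subset_univ _)).trans
      (by rw [show ((⊤ : Opens (X × X)) : Set (X × X)) = Set.univ from rfl, hm_univ])
  have hlam_ne_top : ∀ K, lam K ≠ ⊤ := fun K =>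
    ((hlam_le_one K).trans_lt one_lt_top).ne
  have hlam_mono : ∀ K₁ K₂ : Compacts (X × X), (K₁ : Set (X × X)) ⊆ K₂ → lam K₁ ≤ lam K₂ :=
    fun K₁ K₂ hsub => le_iInf₂ fun U hU => hlam_le K₁ U (hsub.trans hU)
  have hlam_ge : ∀ (K : Compacts (X × X)) (A : Set (X × X)), A ⊆ (K : Set (X × X)) →
      m A ≤ lam K := fun K A hAK => le_iInf₂ fun U hU => hm_mono (hAK.trans hU)
  have hlam_exists : ∀ (K : Compacts (X × X)) (ε : ℝ≥0), 0 < ε →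
      ∃ U : Opens (X × X), (K : Set (X × X)) ⊆ (U : Set (X × X)) ∧ m U ≤ lam K + ε := by
    intro K ε hε
    have h₁ : lam K < lam K + (ε : ℝ≥0∞) :=
      ENNReal.lt_add_right (hlam_ne_top K) (by exact_mod_cast hε.ne')
    rw [hlam_def] at h₁
    simp only at h₁
    rw [iInf_lt_iff] at h₁
    obtain ⟨U, hU⟩ := h₁
    rw [iInf_lt_iff] at hU
    obtain ⟨hKU, hU⟩ := hU
    refine ⟨U, hKU, hU.le.trans ?_⟩
    rw [hlam_def]
  have hlam_sup_le : ∀ K₁ K₂ : Compacts (X × X), lam (K₁ ⊔ K₂) ≤ lam K₁ + lam K₂ := by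
    intro K₁ K₂
    refine ENNReal.le_of_forall_pos_le_add fun ε hε _ => ?_
    obtain ⟨U₁, hKU₁, hU₁⟩ := hlam_exists K₁ (ε / 2) (by positivity)
    obtain ⟨U₂, hKU₂, hU₂⟩ := hlam_exists K₂ (ε / 2) (by positivity)
    calc lam (K₁ ⊔ K₂) ≤ m ((U₁ ⊔ U₂ : Opens (X × X)) : Set (X × X)) := by
          refine hlam_le _ (U₁ ⊔ U₂) ?_
          rw [Compacts.coe_sup, Opens.coe_sup]
          exact union_subset_union hKU₁ hKU₂
      _ ≤ m U₁ + m U₂ := by rw [Opens.coe_sup]; exact hm_add_le _ _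
      _ ≤ (lam K₁ + (ε / 2 : ℝ≥0)) + (lam K₂ + (ε / 2 : ℝ≥0)) := add_le_add hU₁ hU₂
      _ = lam K₁ + lam K₂ + (((ε / 2 : ℝ≥0) : ℝ≥0∞) + ((ε / 2 : ℝ≥0) : ℝ≥0∞)) := by ring
      _ = lam K₁ + lam K₂ + ε := by rw [← ENNReal.coe_add, add_halves]
  have hlam_sup_disj : ∀ K₁ K₂ : Compacts (X × X), Disjoint (K₁ : Set (X × X)) K₂ →
      lam (K₁ ⊔ K₂) = lam K₁ + lam K₂ := by
    intro K₁ K₂ hd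
    refine le_antisymm (hlam_sup_le K₁ K₂) ?_
    obtain ⟨V₁, V₂, hV₁, hV₂, hKV₁, hKV₂, hVd⟩ :=
      SeparatedNhds.of_isCompact_isCompact K₁.isCompact K₂.isCompact hd
    refine le_iInf₂ fun U hU => ?_
    have hU₁ : (K₁ : Set (X × X)) ⊆ (U : Set (X × X)) := by
      refine subset_trans ?_ hU
      rw [Compacts.coe_sup]; exact subset_union_left
    have hU₂ : (K₂ : Set (X × X)) ⊆ (U : Set (X × X)) := by
      refine subset_trans ?_ hU
      rw [Compacts.coe_sup]; exact subset_union_right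
    have h₁ : lam K₁ ≤ m ((U : Set (X × X)) ∩ V₁) :=
      hlam_le K₁ ⟨(U : Set (X × X)) ∩ V₁, U.isOpen.inter hV₁⟩ (subset_inter hU₁ hKV₁)
    have h₂ : lam K₂ ≤ m ((U : Set (X × X)) ∩ V₂) :=
      hlam_le K₂ ⟨(U : Set (X × X)) ∩ V₂, U.isOpen.inter hV₂⟩ (subset_inter hU₂ hKV₂)
    calc lam K₁ + lam K₂ ≤ m ((U : Set (X × X)) ∩ V₁) + m ((U : Set (X × X)) ∩ V₂) :=
          add_le_add h₁ h₂
      _ ≤ m (((U : Set (X × X)) ∩ V₁) ∪ ((U : Set (X × X)) ∩ V₂)) :=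
          hm_add_ge _ _ (hVd.mono inter_subset_right inter_subset_right)
            (U.isOpen.inter hV₂).measurableSet
      _ ≤ m U := hm_mono (union_subset inter_subset_left inter_subset_left)
  set C : Content (X × X) :=
    { toFun := fun K => (lam K).toNNReal
      mono' := fun K₁ K₂ hsub => ENNReal.toNNReal_mono (hlam_ne_top _) (hlam_mono _ _ hsub)
      sup_disjoint' := fun K₁ K₂ hd _ _ => by
        rw [hlam_sup_disj K₁ K₂ hd, ENNReal.toNNReal_add (hlam_ne_top _) (hlam_ne_top _)]
      sup_le' := fun K₁ K₂ => by
        have h2 : (lam (K₁ ⊔ K₂)).toNNReal ≤ (lam K₁ + lam K₂).toNNReal :=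
          ENNReal.toNNReal_mono
            (ENNReal.add_ne_top.mpr ⟨hlam_ne_top _, hlam_ne_top _⟩) (hlam_sup_le K₁ K₂)
        rwa [ENNReal.toNNReal_add (hlam_ne_top _) (hlam_ne_top _)] at h2 } with hC_def
  have hC_coe : ∀ K, (C K : ℝ≥0∞) = lam K := fun K => ENNReal.coe_toNNReal (hlam_ne_top K)
  set μC := C.measure with hμC_def
  have hμC_open : ∀ (U : Set (X × X)), IsOpen U →
      μC U = ⨆ (K : Compacts (X × X)) (_ : (K : Set (X × X)) ⊆ U), lam K := by
    intro U hU
    rw [hμC_def, Content.measure_apply C hU.measurableSet,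
      show C.outerMeasure U = C.innerContent ⟨U, hU⟩ from Content.outerMeasure_opens C ⟨U, hU⟩]
    unfold Content.innerContent
    exact iSup_congr fun K => iSup_congr fun _ => hC_coe K
  have hμCprob : IsProbabilityMeasure μC := by
    constructor
    rw [hμC_open Set.univ isOpen_univ]
    apply le_antisymm
    · exact iSup₂_le fun K _ => hlam_le_one K
    · refine le_trans ?_
        (le_iSup₂ (f := fun (K : Compacts (X × X)) (_ : (K : Set (X × X)) ⊆ Set.univ) => lam K)
          ⟨Set.univ, isCompact_univ⟩ (subset_refl _))
      refine le_iInf₂ fun U hU => ?_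
      have hU' : (U : Set (X × X)) = Set.univ := eq_univ_of_univ_subset hU
      rw [hU', hm_univ]
  haveI := hμCprob
  have hmap_fst : μC.map Prod.fst = P := by
    haveI : IsProbabilityMeasure (μC.map Prod.fst) :=
      Measure.isProbabilityMeasure_map measurable_fst.aemeasurable
    refine ext_of_generate_finite {s : Set X | IsOpen s} ?_ isPiSystem_isOpen ?_ ?_
    · exact BorelSpace.measurable_eq
    · intro U hU
      rw [Measure.map_apply measurable_fst hU.measurableSet]
      have hopen : IsOpen (Prod.fst ⁻¹' U : Set (X × X)) := hU.preimage continuous_fst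
      rw [hμC_open _ hopen]
      apply le_antisymm
      · refine iSup₂_le fun K hK => (hlam_le K ⟨_, hopen⟩ hK).trans ?_
        exact le_of_eq (hm_fst hU.measurableSet)
      · refine le_of_forall_lt fun c hc => ?_
        obtain ⟨K, hKU, hKc, hcK⟩ := (Measure.Regular.innerRegular (μ := P)) hU c hc
        refine hcK.trans_le ?_
        have h1 : P K ≤ lam ⟨K ×ˢ Set.univ, hKc.prod isCompact_univ⟩ := by
          rw [← hm_fst hKc.measurableSet]
          exact hlam_ge _ _ (fun p hp => ⟨hp, trivial⟩)
        refine h1.trans (le_iSup₂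
          (f := fun (K' : Compacts (X × X)) (_ : (K' : Set (X × X)) ⊆ Prod.fst ⁻¹' U) => lam K')
          ⟨K ×ˢ Set.univ, hKc.prod isCompact_univ⟩ ?_)
        exact fun p hp => hKU hp.1
    · rw [Measure.map_apply measurable_fst MeasurableSet.univ]
      simp [measure_univ]
  have hmap_snd : μC.map Prod.snd = Q := by
    haveI : IsProbabilityMeasure (μC.map Prod.snd) :=
      Measure.isProbabilityMeasure_map measurable_snd.aemeasurable
    refine ext_of_generate_finite {s : Set X | IsOpen s} ?_ isPiSystem_isOpen ?_ ?_
    · exact BorelSpace.measurable_eq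
    · intro U hU
      rw [Measure.map_apply measurable_snd hU.measurableSet]
      have hopen : IsOpen (Prod.snd ⁻¹' U : Set (X × X)) := hU.preimage continuous_snd
      rw [hμC_open _ hopen]
      apply le_antisymm
      · refine iSup₂_le fun K hK => (hlam_le K ⟨_, hopen⟩ hK).trans ?_
        exact le_of_eq (hm_snd hU.measurableSet)
      · refine le_of_forall_lt fun c hc => ?_
        obtain ⟨K, hKU, hKc, hcK⟩ := (Measure.Regular.innerRegular (μ := Q)) hU c hc
        refine hcK.trans_le ?_
        have h1 : Q K ≤ lam ⟨Set.univ ×ˢ K, isCompact_univ.prod hKc⟩ := by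
          rw [← hm_snd hKc.measurableSet]
          exact hlam_ge _ _ (fun p hp => ⟨trivial, hp⟩)
        refine h1.trans (le_iSup₂
          (f := fun (K' : Compacts (X × X)) (_ : (K' : Set (X × X)) ⊆ Prod.snd ⁻¹' U) => lam K')
          ⟨Set.univ ×ˢ K, isCompact_univ.prod hKc⟩ ?_)
        exact fun p hp => hKU hp.2
    · rw [Measure.map_apply measurable_snd MeasurableSet.univ]
      simp [measure_univ]
  have hnull : μC {p : X × X | r < edist p.1 p.2} = 0 := by
    have hopen : IsOpen {p : X × X | r < edist p.1 p.2} :=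
      isOpen_lt continuous_const continuous_edist
    rw [hμC_open _ hopen]
    refine le_zero_iff.mp (iSup₂_le fun K hK => ?_)
    rcases (K : Set (X × X)).eq_empty_or_nonempty with hKe | hKne
    · refine le_of_le_of_eq (hlam_le K ⊥ (by rw [hKe]; exact empty_subset _)) ?_
      rw [show ((⊥ : Opens (X × X)) : Set (X × X)) = ∅ from rfl, hm_empty]
    · obtain ⟨p₀, hp₀K, hmin⟩ :=
        K.isCompact.exists_isMinOn hKne continuous_edist.continuousOn
      have hrp : r < edist p₀.1 p₀.2 := hK hp₀K
      obtain ⟨t, hrt, htp⟩ := exists_between hrp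
      have hKsub : (K : Set (X × X)) ⊆ {p : X × X | t < edist p.1 p.2} :=
        fun p hp => htp.trans_le (hmin hp)
      refine le_of_le_of_eq
        (hlam_le K ⟨_, isOpen_lt continuous_const continuous_edist⟩ hKsub) ?_
      have hev : ∀ᶠ n in (atTop : Filter ℕ), π n {p : X × X | t < edist p.1 p.2} = 0 := by
        have h0 : (0 : ℝ≥0∞) < t - r := tsub_pos_iff_lt.2 hrt
        have htend : Tendsto (fun n : ℕ => ((n + 1 : ℕ) : ℝ≥0∞)⁻¹) atTop (𝓝 0) :=
          ENNReal.tendsto_inv_nat_nhds_zero.comp (tendsto_add_atTop_nat 1)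
        filter_upwards [htend.eventually_lt_const h0] with n hn
        have hsub2 : {p : X × X | t < edist p.1 p.2} ⊆
            {p : X × X | r + ((n + 1 : ℕ) : ℝ≥0∞)⁻¹ < edist p.1 p.2} := by
          intro p hp
          have hle : r + ((n + 1 : ℕ) : ℝ≥0∞)⁻¹ ≤ t := by
            calc r + ((n + 1 : ℕ) : ℝ≥0∞)⁻¹ ≤ r + (t - r) := add_le_add le_rfl hn.le
              _ = t := add_tsub_cancel_of_le hrt.le
          exact hle.trans_lt hp
        refine measure_mono_null hsub2 ?_
        have hae0 : ∀ᵐ p ∂(π n), edist p.1 p.2 ≤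
            essSup (fun p : X × X => edist p.1 p.2) (π n) := _root_.ae_le_essSup
        have hae : ∀ᵐ p ∂(π n), edist p.1 p.2 ≤ r + ((n + 1 : ℕ) : ℝ≥0∞)⁻¹ :=
          hae0.mono fun p hp => hp.trans (hπess n).le
        rw [show {p : X × X | r + ((n + 1 : ℕ) : ℝ≥0∞)⁻¹ < edist p.1 p.2} =
            {p : X × X | ¬ edist p.1 p.2 ≤ r + ((n + 1 : ℕ) : ℝ≥0∞)⁻¹} from by
          simp [not_le]]
        exact ae_iff.mp hae
      have hev' : (fun n => π n {p : X × X | t < edist p.1 p.2}) =ᶠ[(𝒰 : Filter ℕ)]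
          (fun _ => 0) := hev.filter_mono h𝒰
      exact tendsto_nhds_unique (hm_tendsto _) (Tendsto.congr' hev'.symm tendsto_const_nhds)
  exact ⟨μC, hμCprob, ⟨hmap_fst, hmap_snd⟩, hnull⟩

noncomputable def tvDist {α : Type*} [MeasurableSpace α] (P Q : Measure α)
    [IsFiniteMeasure P] [IsFiniteMeasure Q] : ℝ :=
  ((P.toSignedMeasure - Q.toSignedMeasure).totalVariation Set.univ).toReal / 2

open Filter Set TopologicalSpace ProbabilityTheory

/-- If `sup_{Q : W∞(Q₀,Q) ≤ r} E_Q f ≤ ε_pre` and `0 ≤ f ≤ M`, then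
`sup_{P : W∞(P₀,P) ≤ r} E_P f ≤ ε_pre + 2 M · TV(P₀, Q₀)`. -/
theorem stmt10 {X : Type*} [MetricSpace X] [CompactSpace X] [MeasurableSpace X] [BorelSpace X]
    (P₀ Q₀ : Measure X) [IsProbabilityMeasure P₀] [IsProbabilityMeasure Q₀]
    (f : X → ℝ) (hf : Measurable f) (M r εpre : ℝ) (hM : 0 ≤ M) (hr : 0 ≤ r)
    (hbd : ∀ x, 0 ≤ f x ∧ f x ≤ M)
    (hQ : ∀ Q : Measure X, IsProbabilityMeasure Q → Winf Q₀ Q ≤ ENNReal.ofReal r →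
      ∫ x, f x ∂Q ≤ εpre) :
    ∀ P : Measure X, IsProbabilityMeasure P → Winf P₀ P ≤ ENNReal.ofReal r →
      ∫ x, f x ∂P ≤ εpre + 2 * M * tvDist P₀ Q₀ := by
  intro P hPprob hWP
  haveI := hPprob
  -- X is nonempty
  have hX : Nonempty X := by
    by_contra hne
    rw [not_nonempty_iff] at hne
    have h1 : (Set.univ : Set X) = ∅ := Set.univ_eq_empty_iff.2 hne
    have h2 := measure_univ (μ := P₀)
    rw [h1, measure_empty] at h2
    exact zero_ne_one h2
  -- optimal coupling of (P₀, P)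
  obtain ⟨μC, hμprob, ⟨hfst, hsnd⟩, hnullC⟩ :=
    exists_good_coupling P₀ P ENNReal.ofReal_ne_top hWP
  haveI := hμprob
  have hdis : P₀ ⊗ₘ μC.condKernel = μC := by
    have h := Measure.disintegrate μC μC.condKernel
    rwa [show μC.fst = P₀ from hfst] at h
  set κ := μC.condKernel with hκ_def
  -- Hahn decomposition of P₀ - Q₀
  set s : SignedMeasure X := P₀.toSignedMeasure - Q₀.toSignedMeasure with hs_def
  obtain ⟨S, hSm, hS2, hS3, hposS, hnegS⟩ := s.toJordanDecomposition_spec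
  have hsApp : ∀ A : Set X, MeasurableSet A → s A = (P₀ A).toReal - (Q₀ A).toReal :=
    fun A hA => Measure.toSignedMeasure_sub_apply hA
  have hQP : Q₀.restrict S ≤ P₀.restrict S := by
    rw [Measure.le_iff]
    intro A hA
    rw [Measure.restrict_apply hA, Measure.restrict_apply hA]
    have h0 := (VectorMeasure.restrict_le_restrict_iff _ _ hSm).1 hS2
      (hA.inter hSm) inter_subset_right
    rw [VectorMeasure.coe_zero, Pi.zero_apply, hsApp _ (hA.inter hSm)] at h0
    have h1 : (Q₀ (A ∩ S)).toReal ≤ (P₀ (A ∩ S)).toReal := by linarith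
    exact (ENNReal.toReal_le_toReal (measure_ne_top _ _) (measure_ne_top _ _)).1 h1
  have hPQc : P₀.restrict Sᶜ ≤ Q₀.restrict Sᶜ := by
    rw [Measure.le_iff]
    intro A hA
    rw [Measure.restrict_apply hA, Measure.restrict_apply hA]
    have h0 := (VectorMeasure.restrict_le_restrict_iff _ _ hSm.compl).1 hS3
      (hA.inter hSm.compl) inter_subset_right
    rw [VectorMeasure.coe_zero, Pi.zero_apply, hsApp _ (hA.inter hSm.compl)] at h0
    have h1 : (P₀ (A ∩ Sᶜ)).toReal ≤ (Q₀ (A ∩ Sᶜ)).toReal := by linarith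
    exact (ENNReal.toReal_le_toReal (measure_ne_top _ _) (measure_ne_top _ _)).1 h1
  set ν : Measure X := Q₀.restrict S + P₀.restrict Sᶜ with hν_def
  set α : Measure X := P₀.restrict S - Q₀.restrict S with hα_def
  set β : Measure X := Q₀.restrict Sᶜ - P₀.restrict Sᶜ with hβ_def
  haveI : IsFiniteMeasure α := isFiniteMeasure_of_le (P₀.restrict S) Measure.sub_le
  haveI : IsFiniteMeasure β := isFiniteMeasure_of_le (Q₀.restrict Sᶜ) Measure.sub_le
  have hνα : ν + α = P₀ := by
    have h1 : α + Q₀.restrict S = P₀.restrict S := Measure.sub_add_cancel_of_le hQP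
    calc ν + α = (α + Q₀.restrict S) + P₀.restrict Sᶜ := by rw [hν_def]; abel
      _ = P₀.restrict S + P₀.restrict Sᶜ := by rw [h1]
      _ = P₀ := Measure.restrict_add_restrict_compl hSm
  have hνβ : ν + β = Q₀ := by
    have h1 : β + P₀.restrict Sᶜ = Q₀.restrict Sᶜ := Measure.sub_add_cancel_of_le hPQc
    calc ν + β = Q₀.restrict S + (β + P₀.restrict Sᶜ) := by rw [hν_def]; abel
      _ = Q₀.restrict S + Q₀.restrict Sᶜ := by rw [h1]
      _ = Q₀ := Measure.restrict_add_restrict_compl hSm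
  have hνP₀ : ν ≤ P₀ := by rw [← hνα]; exact Measure.le_add_right le_rfl
  -- transported measures
  set T : Measure X := (ν ⊗ₘ κ).map Prod.snd with hT_def
  set A' : Measure X := (α ⊗ₘ κ).map Prod.snd with hA'_def
  have htot : ∀ (ρ : Measure X) [IsFiniteMeasure ρ], ((ρ ⊗ₘ κ).map Prod.snd) univ = ρ univ := by
    intro ρ _
    rw [Measure.map_apply measurable_snd MeasurableSet.univ]
    simp only [Set.preimage_univ]
    rw [Measure.compProd_apply MeasurableSet.univ]
    simp [measure_univ, lintegral_one]
  have hsplit : T + A' = P := by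
    rw [hT_def, hA'_def, ← Measure.map_add _ _ measurable_snd, ← Measure.compProd_add_left,
      hνα, hdis, hsnd]
  set Q : Measure X := T + β with hQ_def
  haveI hQprob : IsProbabilityMeasure Q := by
    constructor
    rw [hQ_def, Measure.add_apply, hT_def, htot ν, ← Measure.add_apply, hνβ, measure_univ]
  -- the coupling between Q₀ and Q
  have hdiag_meas : Measurable (fun x : X => (x, x)) := measurable_id.prodMk measurable_id
  set π' : Measure (X × X) := (ν ⊗ₘ κ) + β.map (fun x => (x, x)) with hπ'_def
  haveI hπ'prob : IsProbabilityMeasure π' := by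
    constructor
    rw [hπ'_def, Measure.add_apply]
    have h1 : (ν ⊗ₘ κ) univ = ν univ := by
      rw [Measure.compProd_apply MeasurableSet.univ]
      simp [measure_univ, lintegral_one]
    rw [h1, Measure.map_apply hdiag_meas MeasurableSet.univ]
    simp only [Set.preimage_univ]
    rw [← Measure.add_apply, hνβ, measure_univ]
  have hπ'couple : IsCoupling π' Q₀ Q := by
    constructor
    · rw [hπ'_def, Measure.map_add _ _ measurable_fst,
        Measure.map_map measurable_fst hdiag_meas]
      have h1 : (ν ⊗ₘ κ).map Prod.fst = ν := Measure.fst_compProd ν κ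
      have h2 : (Prod.fst ∘ fun x : X => (x, x)) = id := rfl
      rw [h1, h2, Measure.map_id, hνβ]
    · rw [hπ'_def, Measure.map_add _ _ measurable_snd,
        Measure.map_map measurable_snd hdiag_meas]
      have h2 : (Prod.snd ∘ fun x : X => (x, x)) = id := rfl
      rw [h2, Measure.map_id, hQ_def, hT_def]
  have hGmeas : MeasurableSet {p : X × X | ENNReal.ofReal r < edist p.1 p.2} :=
    (isOpen_lt continuous_const continuous_edist).measurableSet
  have hπ'null : π' {p : X × X | ENNReal.ofReal r < edist p.1 p.2} = 0 := by
    rw [hπ'_def, Measure.add_apply]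
    have h1 : (ν ⊗ₘ κ) {p : X × X | ENNReal.ofReal r < edist p.1 p.2} = 0 := by
      refine le_antisymm ?_ zero_le
      have h2 : (ν ⊗ₘ κ) {p : X × X | ENNReal.ofReal r < edist p.1 p.2} ≤
          (P₀ ⊗ₘ κ) {p : X × X | ENNReal.ofReal r < edist p.1 p.2} := by
        rw [Measure.compProd_apply hGmeas, Measure.compProd_apply hGmeas]
        exact lintegral_mono' hνP₀ le_rfl
      rw [hdis, hnullC] at h2
      exact h2
    have h3 : (β.map fun x : X => (x, x)) {p : X × X | ENNReal.ofReal r < edist p.1 p.2} = 0 := by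
      rw [Measure.map_apply hdiag_meas hGmeas]
      have h4 : ((fun x : X => (x, x)) ⁻¹' {p : X × X | ENNReal.ofReal r < edist p.1 p.2}) =
          (∅ : Set X) := by
        ext x
        simp [edist_self]
      rw [h4, measure_empty]
    rw [h1, h3, add_zero]
  have hWQ : Winf Q₀ Q ≤ ENNReal.ofReal r := by
    have hess : essSup (fun p : X × X => edist p.1 p.2) π' ≤ ENNReal.ofReal r := by
      refine essSup_le_of_ae_le _ ?_
      have h5 : {p : X × X | ¬ edist p.1 p.2 ≤ ENNReal.ofReal r} =
          {p : X × X | ENNReal.ofReal r < edist p.1 p.2} := by simp [not_le]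
      exact ae_iff.mpr (by rw [h5]; exact hπ'null)
    refine le_trans ?_ hess
    unfold Winf
    exact iInf₂_le π' ⟨hπ'prob, hπ'couple⟩
  -- integrability
  have hfint : ∀ (ρ : Measure X) [IsFiniteMeasure ρ], Integrable f ρ := by
    intro ρ _
    refine ⟨hf.aestronglyMeasurable, HasFiniteIntegral.of_bounded (C := M) (ae_of_all _ ?_)⟩
    intro x
    rw [Real.norm_eq_abs, abs_of_nonneg (hbd x).1]
    exact (hbd x).2
  have hA'univ : A' univ = α univ := htot α
  have hA'bound : ∫ x, f x ∂A' ≤ (α univ).toReal * M := by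
    have h6 : ∫ x, f x ∂A' ≤ ∫ _, M ∂A' :=
      integral_mono (hfint A') (integrable_const M) fun x => (hbd x).2
    rwa [integral_const, measureReal_def, hA'univ, smul_eq_mul] at h6
  -- the key TV bound
  have hαStv : (α univ).toReal * M ≤ 2 * M * tvDist P₀ Q₀ := by
    have hQS_le : Q₀ S ≤ P₀ S := by
      have h7 := Measure.le_iff.1 hQP S hSm
      rwa [Measure.restrict_apply hSm, Set.inter_self, Measure.restrict_apply hSm,
        Set.inter_self] at h7
    have hαuniv : α univ = P₀ S - Q₀ S := by
      rw [hα_def, Measure.sub_apply MeasurableSet.univ hQP, Measure.restrict_apply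
        MeasurableSet.univ, Set.univ_inter, Measure.restrict_apply MeasurableSet.univ,
        Set.univ_inter]
    have hαR : (α univ).toReal = (P₀ S).toReal - (Q₀ S).toReal := by
      rw [hαuniv, ENNReal.toReal_sub_of_le hQS_le (measure_ne_top _ _)]
    have hptv : (s.toJordanDecomposition.posPart univ).toReal =
        (P₀ S).toReal - (Q₀ S).toReal := by
      rw [hposS, SignedMeasure.toMeasureOfZeroLE_apply s hS2 hSm MeasurableSet.univ]
      simp only [Set.inter_univ]
      rw [ENNReal.coe_toReal, NNReal.coe_mk]
      exact hsApp S hSm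
    have htvval : tvDist P₀ Q₀ =
        ((s.totalVariation univ).toReal) / 2 := rfl
    have htvsplit : (s.totalVariation univ).toReal =
        (s.toJordanDecomposition.posPart univ).toReal +
        (s.toJordanDecomposition.negPart univ).toReal := by
      rw [show s.totalVariation = s.toJordanDecomposition.posPart +
        s.toJordanDecomposition.negPart from rfl, Measure.add_apply,
        ENNReal.toReal_add (measure_ne_top _ _) (measure_ne_top _ _)]
    have hneg_nonneg : 0 ≤ (s.toJordanDecomposition.negPart univ).toReal :=
      ENNReal.toReal_nonneg
    have h8 : (α univ).toReal ≤ 2 * tvDist P₀ Q₀ := by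
      rw [htvval, htvsplit, hαR, ← hptv]
      linarith
    calc (α univ).toReal * M ≤ (2 * tvDist P₀ Q₀) * M := by
          have := ENNReal.toReal_nonneg (a := α univ)
          nlinarith
      _ = 2 * M * tvDist P₀ Q₀ := by ring
  -- final chain
  have hβint : 0 ≤ ∫ x, f x ∂β := integral_nonneg fun x => (hbd x).1
  have hQbound := hQ Q hQprob hWQ
  calc ∫ x, f x ∂P = ∫ x, f x ∂T + ∫ x, f x ∂A' := by
        rw [← hsplit, integral_add_measure (hfint T) (hfint A')]
    _ ≤ ∫ x, f x ∂T + (α univ).toReal * M := by linarith [hA'bound]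
    _ ≤ (∫ x, f x ∂T + ∫ x, f x ∂β) + (α univ).toReal * M := by linarith
    _ = ∫ x, f x ∂Q + (α univ).toReal * M := by
        rw [hQ_def, integral_add_measure (hfint T) (hfint β)]
    _ ≤ εpre + (α univ).toReal * M := by linarith
    _ ≤ εpre + 2 * M * tvDist P₀ Q₀ := by linarith [hαStv]
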